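/- Let D be a basic subset. Then: (1) x_D is regular in J, i.e. there is no idempotent e ∈ A with e ≠ 1 and e·x_D = x_D·e = x_D, if and only if row(D) ∪ col(D) = {1, …, n}; (2) λ_D is regular in J^*, i.e. there is no idempotent e ∈ A with e ≠ 1 such that λ_D(x) = λ_D(exe) for all x ∈ J, if and only if row(D) ∪ col(D) = {1, …, n}. -/

import Mathlib

open Matrix

/-- A matrix lies in `t(n,F)` (upper triangular). -/
def IsUT {F : Type*} [Semiring F] {n : ℕ} (g : Matrix (Fin n) (Fin n) F) : Prop :=
  ∀ i j : Fin n, j < i → g i j = 0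

/-- A matrix lies in `J = n(n,F)` (strictly upper triangular). -/
def IsStrictUT {F : Type*} [Semiring F] {n : ℕ} (x : Matrix (Fin n) (Fin n) F) : Prop :=
  ∀ i j : Fin n, j ≤ i → x i j = 0

/-- `D` is a basic subset: a set of positive roots `(i,j)`, `i < j`, with at most one
element in each row and at most one element in each column. -/
def IsBasic {n : ℕ} (D : Finset (Fin n × Fin n)) : Prop :=
  (∀ p ∈ D, p.1 < p.2) ∧ (∀ p ∈ D, ∀ q ∈ D, p.1 = q.1 → p = q) ∧
    (∀ p ∈ D, ∀ q ∈ D, p.2 = q.2 → p = q)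

/-- `x_D = Σ_{(i,j) ∈ D} E_{ij}`. -/
def xBasic {F : Type*} [Semiring F] [DecidableEq F] {n : ℕ}
    (D : Finset (Fin n × Fin n)) : Matrix (Fin n) (Fin n) F :=
  ∑ p ∈ D, Matrix.single p.1 p.2 1

/-- `λ_D(x) = Σ_{(i,j) ∈ D} x_{ij}`. -/
def lamBasic {F : Type*} [Semiring F] {n : ℕ} (D : Finset (Fin n × Fin n))
    (x : Matrix (Fin n) (Fin n) F) : F :=
  ∑ p ∈ D, x p.1 p.2

section Aux
variable {F : Type*} [Field F] {n : ℕ}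

lemma xBasic_apply' [DecidableEq F] (D : Finset (Fin n × Fin n)) (i j : Fin n) :
    (xBasic (F := F) D) i j = if (i, j) ∈ D then 1 else 0 := by
  classical
  unfold xBasic
  rw [Matrix.sum_apply]
  have : ∀ p ∈ D, single p.1 p.2 (1:F) i j = if (i,j) = p then 1 else 0 := by
    intro p _
    by_cases h : (i, j) = p
    · subst h; simp
    · rw [if_neg h, Matrix.single_apply_of_ne]
      rintro ⟨h1, h2⟩
      exact h (Prod.ext_iff.mpr ⟨h1.symm, h2.symm⟩)
  rw [Finset.sum_congr rfl this, Finset.sum_ite_eq]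

lemma diag_zero_or_one {e : Matrix (Fin n) (Fin n) F} (he : IsUT e) (h2 : e * e = e)
    (k : Fin n) : e k k = 0 ∨ e k k = 1 := by
  have h := congr_fun (congr_fun h2 k) k
  rw [Matrix.mul_apply, Finset.sum_eq_single k
    (fun m _ hmk => by
      rcases lt_or_gt_of_ne hmk with hm | hm
      · rw [he k m hm, zero_mul]
      · rw [he m k hm, mul_zero])
    (fun h => absurd (Finset.mem_univ k) h)] at h
  have h3 : e k k * (e k k - 1) = 0 := by ring_nf; linear_combination h
  rcases mul_eq_zero.mp h3 with h4 | h4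
  · exact Or.inl h4
  · exact Or.inr (sub_eq_zero.mp h4)

lemma eq_one_of_diag_one {e : Matrix (Fin n) (Fin n) F} (he : IsUT e) (h2 : e * e = e)
    (hd : ∀ k, e k k = 1) : e = 1 := by
  have key : ∀ g : ℕ, ∀ i j : Fin n, i < j → (j:ℕ) - i ≤ g → e i j = 0 := by
    intro g
    induction g with
    | zero => intro i j hij hg; have := Fin.lt_def.mp hij; omega
    | succ g ih =>
      intro i j hij hg
      have hij' : (i:ℕ) < j := Fin.lt_def.mp hij
      have h := congr_fun (congr_fun h2 i) j
      rw [Matrix.mul_apply] at h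
      have hsub : ∑ m : Fin n, e i m * e m j = ∑ m ∈ ({i, j} : Finset (Fin n)), e i m * e m j := by
        refine (Finset.sum_subset (Finset.subset_univ _) ?_).symm
        intro m _ hm
        simp only [Finset.mem_insert, Finset.mem_singleton, not_or] at hm
        rcases lt_trichotomy (m:ℕ) (i:ℕ) with h1 | h1 | h1
        · rw [he i m (Fin.lt_def.mpr h1), zero_mul]
        · exact absurd (Fin.ext h1) hm.1
        · rcases lt_trichotomy (m:ℕ) (j:ℕ) with h3 | h3 | h3
          · rw [ih i m (Fin.lt_def.mpr h1) (by omega), zero_mul]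
          · exact absurd (Fin.ext h3) hm.2
          · rw [he m j (Fin.lt_def.mpr h3), mul_zero]
      rw [hsub, Finset.sum_pair (Fin.ne_of_lt hij), hd i, hd j, one_mul, mul_one] at h
      -- h : e i j + e i j = e i j
      have := add_left_cancel (a := e i j) (b := e i j) (c := 0) (by rw [add_zero]; exact h)
      exact this
  ext i j
  rcases lt_trichotomy i j with h | h | h
  · rw [key n i j h (by omega), Matrix.one_apply_ne (Fin.ne_of_lt h)]
  · subst h; rw [hd i, Matrix.one_apply_eq]
  · rw [he i j h, Matrix.one_apply_ne (Fin.ne_of_gt h)]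

end Aux

section Main
variable {F : Type*} [Field F] {n : ℕ}

/-- From the coadjoint-fixing condition, all endpoints of `D`-pairs have diagonal entry 1. -/
lemma diag_one_of_lam {D : Finset (Fin n × Fin n)} (hD : IsBasic D)
    {e : Matrix (Fin n) (Fin n) F} (he : IsUT e) (h2 : e * e = e)
    (H : ∀ i j : Fin n, i < j →
      (∑ p ∈ D, e p.1 i * e j p.2) = if (i, j) ∈ D then 1 else 0) :
    ∀ p ∈ D, e p.1 p.1 = 1 ∧ e p.2 p.2 = 1 := by
  classical
  suffices key : ∀ G : ℕ, ∀ a b : Fin n, (a, b) ∈ D → n - ((b:ℕ) - a) ≤ G →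
      e a a = 1 ∧ e b b = 1 by
    intro p hp
    have := key n p.1 p.2 (by simpa using hp) (by omega)
    exact this
  intro G
  induction G with
  | zero =>
    intro a b hab h0
    have h1 := Fin.lt_def.mp (hD.1 _ hab)
    have h2 := b.isLt
    omega
  | succ G ih =>
    intro a b hab hG
    have hab' : (a:ℕ) < b := Fin.lt_def.mp (hD.1 _ hab)
    have hbn : (b:ℕ) < n := b.isLt
    have outer : ∀ c d : Fin n, (c, d) ∈ D → (b:ℕ) - a < (d:ℕ) - c →
        e c c = 1 ∧ e d d = 1 := by
      intro c d h hgap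
      exact ih c d h (by omega)
    have inner : ∀ N : ℕ, ∀ c d : Fin n, (c, d) ∈ D → (c:ℕ) ≤ a → (b:ℕ) < d →
        n - (d:ℕ) ≤ N → e c a = 0 := by
      intro N
      induction N with
      | zero => intro c d _ _ _ hN; have := d.isLt; omega
      | succ N ihN =>
        intro c d hcd hca hbd hN
        have hdn : (d:ℕ) < n := d.isLt
        have had : a < d := Fin.lt_def.mpr (by omega)
        have hnotD : (a, d) ∉ D := by
          intro hmem
          have := hD.2.1 _ hmem _ hab rfl
          have : d = b := congrArg Prod.snd this
          have := Fin.val_eq_of_eq this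
          omega
        have Hsum := H a d had
        rw [if_neg hnotD] at Hsum
        have hdd : e d d = 1 := (outer c d hcd (by omega)).2
        have hsingle : ∑ p ∈ D, e p.1 a * e d p.2 = e c a * e d d := by
          apply Finset.sum_eq_single_of_mem (c, d) hcd
          intro p hp hne
          rcases lt_trichotomy ((p.2 : Fin n) : ℕ) ((d : Fin n) : ℕ) with h1 | h1 | h1
          · rw [he d p.2 (Fin.lt_def.mpr h1), mul_zero]
          · exfalso
            exact hne (hD.2.2 p hp (c, d) hcd (Fin.ext h1))
          · rcases le_or_gt ((p.1 : Fin n) : ℕ) ((a : Fin n) : ℕ) with h2 | h2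
            · rw [ihN p.1 p.2 (by simpa using hp) h2 (by omega) (by omega), zero_mul]
            · rw [he p.1 a (Fin.lt_def.mpr h2), zero_mul]
        rw [hsingle, hdd, mul_one] at Hsum
        exact Hsum
    have Hsum := H a b (Fin.lt_def.mpr hab')
    rw [if_pos hab] at Hsum
    have hsingle : ∑ p ∈ D, e p.1 a * e b p.2 = e a a * e b b := by
      apply Finset.sum_eq_single_of_mem (a, b) hab
      intro p hp hne
      rcases lt_trichotomy ((p.2 : Fin n) : ℕ) ((b : Fin n) : ℕ) with h1 | h1 | h1
      · rw [he b p.2 (Fin.lt_def.mpr h1), mul_zero]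
      · exfalso
        exact hne (hD.2.2 p hp (a, b) hab (Fin.ext h1))
      · rcases le_or_gt ((p.1 : Fin n) : ℕ) ((a : Fin n) : ℕ) with h2 | h2
        · rw [inner n p.1 p.2 (by simpa using hp) h2 (by omega) (by omega), zero_mul]
        · rw [he p.1 a (Fin.lt_def.mpr h2), zero_mul]
    rw [hsingle] at Hsum
    rcases diag_zero_or_one he h2 a with ha | ha
    · rw [ha, zero_mul] at Hsum; exact absurd Hsum zero_ne_one
    rcases diag_zero_or_one he h2 b with hb | hb
    · rw [hb, mul_zero] at Hsum; exact absurd Hsum zero_ne_one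
    exact ⟨ha, hb⟩

end Main

section Rest
variable {F : Type*} [Field F] {n : ℕ}

lemma mul_std_mul (e : Matrix (Fin n) (Fin n) F) (i j a b : Fin n) :
    (e * single i j (1:F) * e) a b = e a i * e j b := by
  rw [Matrix.mul_apply, Finset.sum_eq_single j
    (fun t _ ht => by rw [Matrix.mul_single_apply_of_ne _ i j a t ht, zero_mul])
    (fun h => absurd (Finset.mem_univ j) h)]
  rw [Matrix.mul_single_apply_same, mul_one]

lemma lam_std (D : Finset (Fin n × Fin n)) (i j : Fin n) :
    lamBasic D (single i j (1:F)) = if (i, j) ∈ D then 1 else 0 := by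
  classical
  unfold lamBasic
  have : ∀ p ∈ D, single i j (1:F) p.1 p.2 = if (i, j) = p then 1 else 0 := by
    intro p _
    by_cases h : (i, j) = p
    · subst h; simp
    · rw [if_neg h, Matrix.single_apply_of_ne]
      rintro ⟨h1, h2⟩
      exact h (Prod.ext_iff.mpr ⟨h1, h2⟩)
  rw [Finset.sum_congr rfl this, Finset.sum_ite_eq]

/-- Part 1: the fixing conditions give diagonal one at every covered index. -/
lemma diag_one_of_x [DecidableEq F] {D : Finset (Fin n × Fin n)} (hD : IsBasic D)
    {e : Matrix (Fin n) (Fin n) F}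
    (hl : e * xBasic D = xBasic D) (hr : xBasic D * e = xBasic D)
    {k : Fin n} (hk : ∃ p ∈ D, p.1 = k ∨ p.2 = k) : e k k = 1 := by
  classical
  obtain ⟨p, hp, hcase⟩ := hk
  rcases hcase with h | h
  · -- p = (k, p.2)
    have hkp : (k, p.2) ∈ D := by rw [← h]; simpa using hp
    have hcol := congr_fun (congr_fun hl k) p.2
    rw [Matrix.mul_apply] at hcol
    have hs : ∑ m : Fin n, e k m * xBasic D m p.2 = e k k * xBasic D k p.2 := by
      apply Finset.sum_eq_single_of_mem k (Finset.mem_univ k)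
      intro m _ hm
      rw [xBasic_apply', if_neg, mul_zero]
      intro hmem
      exact hm (congrArg Prod.fst (hD.2.2 _ hmem _ hkp rfl))
    rw [hs, xBasic_apply', if_pos hkp, mul_one] at hcol
    exact hcol
  · have hkp : (p.1, k) ∈ D := by rw [← h]; simpa using hp
    have hcol := congr_fun (congr_fun hr p.1) k
    rw [Matrix.mul_apply] at hcol
    have hs : ∑ m : Fin n, xBasic D p.1 m * e m k = xBasic D p.1 k * e k k := by
      apply Finset.sum_eq_single_of_mem k (Finset.mem_univ k)
      intro m _ hm
      rw [xBasic_apply', if_neg, zero_mul]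
      intro hmem
      exact hm (congrArg Prod.snd (hD.2.1 _ hmem _ hkp rfl))
    rw [hs, xBasic_apply', if_pos hkp, one_mul] at hcol
    exact hcol

/-- Construction of the nontrivial idempotent when some index is uncovered. -/
lemma construct [DecidableEq F] {D : Finset (Fin n × Fin n)}
    {k : Fin n} (hk : ∀ p ∈ D, p.1 ≠ k ∧ p.2 ≠ k) :
    ∃ e : Matrix (Fin n) (Fin n) F, IsUT e ∧ e * e = e ∧ e ≠ 1 ∧
      (e * xBasic D = xBasic D ∧ xBasic D * e = xBasic D) ∧
      (∀ x : Matrix (Fin n) (Fin n) F, IsStrictUT x →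
        lamBasic D x = lamBasic D (e * x * e)) := by
  classical
  refine ⟨1 - single k k 1, ?_, ?_, ?_, ⟨?_, ?_⟩, ?_⟩
  · intro i j hij
    rw [Matrix.sub_apply, Matrix.one_apply_ne (Fin.ne_of_gt hij),
      Matrix.single_apply_of_ne k k 1 i j
        (fun hc => absurd hij (by rw [← hc.1, ← hc.2]; exact lt_irrefl k)),
      sub_zero]
  · have hEE : single k k (1:F) * single k k (1:F) = single k k 1 := by
      rw [Matrix.single_mul_single_same, one_mul]
    calc (1 - single k k (1:F)) * (1 - single k k 1)
        = 1 - single k k 1 - single k k 1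
          + single k k (1:F) * single k k 1 := by noncomm_ring
      _ = 1 - single k k 1 := by rw [hEE]; abel
  · intro h
    have := congr_fun (congr_fun h k) k
    simp [Matrix.sub_apply] at this
  · rw [sub_mul, one_mul, sub_eq_self]
    unfold xBasic
    rw [Finset.mul_sum]
    apply Finset.sum_eq_zero
    intro p hp
    exact Matrix.single_mul_single_of_ne _ _ _ _ (Ne.symm (hk p hp).1) _
  · rw [mul_sub, mul_one, sub_eq_self]
    unfold xBasic
    rw [Finset.sum_mul]
    apply Finset.sum_eq_zero
    intro p hp
    exact Matrix.single_mul_single_of_ne _ _ _ _ (hk p hp).2 _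
  · intro x _
    unfold lamBasic
    apply Finset.sum_congr rfl
    intro p hp
    have h2 : (1 - single k k (1:F)) * x * (1 - single k k 1)
        = (x - single k k 1 * x)
          - (x - single k k 1 * x) * single k k 1 := by
      rw [sub_mul, one_mul, mul_sub, mul_one]
    rw [h2, Matrix.sub_apply, Matrix.sub_apply,
      Matrix.single_mul_apply_of_ne _ _ _ _ _ (hk p hp).1,
      Matrix.mul_single_apply_of_ne _ _ _ _ _ (hk p hp).2,
      sub_zero, sub_zero]

end Rest

/-- Lemma 5.1: for a basic subset `D`, (1) `x_D` is regular in `J` (there is no idempotent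
`e ≠ 1` of `A = t(n,F_q)` with `e x_D = x_D e = x_D`) iff `row(D) ∪ col(D) = {1,…,n}`;
(2) `λ_D` is regular in `J^*` (there is no idempotent `e ≠ 1` of `A` with
`λ_D(x) = λ_D(e x e)` for all `x ∈ J`) iff `row(D) ∪ col(D) = {1,…,n}`. -/
theorem xBasic_lamBasic_regular_iff
    {F : Type*} [Field F] [Fintype F] [DecidableEq F] {n : ℕ}
    (D : Finset (Fin n × Fin n)) (hD : IsBasic D) :
    ((¬ ∃ e : Matrix (Fin n) (Fin n) F, IsUT e ∧ e * e = e ∧ e ≠ 1 ∧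
        e * xBasic D = xBasic D ∧ xBasic D * e = xBasic D) ↔
      (∀ k : Fin n, ∃ p ∈ D, p.1 = k ∨ p.2 = k)) ∧
    ((¬ ∃ e : Matrix (Fin n) (Fin n) F, IsUT e ∧ e * e = e ∧ e ≠ 1 ∧
        ∀ x : Matrix (Fin n) (Fin n) F, IsStrictUT x →
          lamBasic D x = lamBasic D (e * x * e)) ↔
      (∀ k : Fin n, ∃ p ∈ D, p.1 = k ∨ p.2 = k)) := by
  classical
  constructor
  · constructor
    · intro hreg k
      by_contra hk
      push_neg at hk
      obtain ⟨e, h1, h2, h3, ⟨h4, h5⟩, _⟩ := construct (F := F) (D := D) (k := k)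
        hk
      exact hreg ⟨e, h1, h2, h3, h4, h5⟩
    · rintro hcov ⟨e, he, h2, hne, hl, hr⟩
      exact hne (eq_one_of_diag_one he h2 (fun k => diag_one_of_x hD hl hr (hcov k)))
  · constructor
    · intro hreg k
      by_contra hk
      push_neg at hk
      obtain ⟨e, h1, h2, h3, _, h6⟩ := construct (F := F) (D := D) (k := k)
        hk
      exact hreg ⟨e, h1, h2, h3, h6⟩
    · rintro hcov ⟨e, he, h2, hne, hlam⟩
      have H : ∀ i j : Fin n, i < j →
          (∑ p ∈ D, e p.1 i * e j p.2) = if (i, j) ∈ D then 1 else 0 := by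
        intro i j hij
        have hx : IsStrictUT (single i j (1:F)) := by
          intro a b hba
          apply Matrix.single_apply_of_ne
          rintro ⟨rfl, rfl⟩
          exact absurd hij (not_lt.mpr hba)
        have hthis := hlam _ hx
        rw [lam_std] at hthis
        have hlam2 : lamBasic D (e * single i j (1:F) * e)
            = ∑ p ∈ D, e p.1 i * e j p.2 :=
          Finset.sum_congr rfl (fun p _ => mul_std_mul e i j p.1 p.2)
        rw [hlam2] at hthis
        exact hthis.symm
      have hdiag : ∀ k, e k k = 1 := by
        intro k
        obtain ⟨p, hp, hc⟩ := hcov k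
        have hpd := diag_one_of_lam hD he h2 H p hp
        rcases hc with h | h
        · rw [← h]; exact hpd.1
        · rw [← h]; exact hpd.2
      exact hne (eq_one_of_diag_one he h2 hdiag)
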